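/- arXiv:1504.07139 — 4 statements merged into one kernel-verified Lean document; each statement's English description precedes it below -/
import Mathlib

section
/- Let p be a probability kernel on ℤ^d whose support generates ℤ^d as a group (strongly aperiodic after any translation). Then every bounded function h : ℤ^d → ℝ satisfying h(x) = ∑_y p(y-x) h(y) for all x is constant. -/
open scoped BigOperators
open Filter Topology

private lemma ultralim_exists (U : Ultrafilter ℕ) {M : ℝ} {f : ℕ → ℝ}
    (hf : ∀ n, |f n| ≤ M) : ∃ L, |L| ≤ M ∧ Tendsto f U (𝓝 L) := by
  have hc : IsCompact (Set.Icc (-M) M) := isCompact_Icc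
  have hle : ↑(U.map f) ≤ Filter.principal (Set.Icc (-M) M) := by
    rw [Ultrafilter.coe_map, Filter.le_principal_iff, Filter.mem_map]
    exact Filter.Eventually.of_forall fun n => abs_le.mp (hf n)
  obtain ⟨L, hL, hten⟩ := hc.ultrafilter_le_nhds (U.map f) hle
  exact ⟨L, abs_le.mpr hL, hten⟩

private lemma key_step {d : ℕ} (T : Finset (Fin d → ℤ)) (p : (Fin d → ℤ) → ℝ)
    (hnn : ∀ z, 0 ≤ p z) (hT1 : ∑ z ∈ T, p z = 1)
    (h : (Fin d → ℤ) → ℝ) (M : ℝ) (hb : ∀ x, |h x| ≤ M)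
    (harm : ∀ x, h x = ∑ z ∈ T, p z * h (x + z))
    (z : Fin d → ℤ) (hzT : z ∈ T) (hz : 0 < p z) :
    ∀ x, h (x + z) ≤ h x := by
  set u : (Fin d → ℤ) → ℝ := fun x => h (x + z) - h x with hu
  have hub : ∀ x, |u x| ≤ 2 * M := by
    intro x
    calc |h (x + z) - h x| ≤ |h (x + z)| + |h x| := abs_sub _ _
    _ ≤ M + M := add_le_add (hb _) (hb _)
    _ = 2 * M := by ring
  have hbdd : BddAbove (Set.range u) := by
    refine ⟨2 * M, ?_⟩
    rintro _ ⟨x, rfl⟩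
    exact (abs_le.mp (hub x)).2
  set s : ℝ := sSup (Set.range u) with hs
  have hus : ∀ x, u x ≤ s := fun x => le_csSup hbdd ⟨x, rfl⟩
  obtain ⟨c, -, hct, hcm⟩ := exists_seq_tendsto_sSup (Set.range_nonempty u) hbdd
  choose xs hxs using hcm
  set U : Ultrafilter ℕ := Ultrafilter.of atTop with hU
  have hUle : (U : Filter ℕ) ≤ atTop := Ultrafilter.of_le _
  choose g hgM hgT using fun x =>
    ultralim_exists U (f := fun n => h (x + xs n)) (fun n => hb _)
  -- g is harmonic
  have gharm : ∀ x, g x = ∑ z' ∈ T, p z' * g (x + z') := by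
    intro x
    have t1 : Tendsto (fun n => h (x + xs n)) U (𝓝 (g x)) := hgT x
    have t2 : Tendsto (fun n => ∑ z' ∈ T, p z' * h (x + xs n + z')) U
        (𝓝 (∑ z' ∈ T, p z' * g (x + z'))) := by
      refine tendsto_finset_sum _ fun z' _ => ?_
      have := (hgT (x + z')).const_mul (p z')
      simpa [add_right_comm x z'] using this
    have t1' : Tendsto (fun n => h (x + xs n)) U
        (𝓝 (∑ z' ∈ T, p z' * g (x + z'))) := by
      simpa only [← harm] using t2.congr fun n => (harm (x + xs n)).symm
    exact tendsto_nhds_unique t1 t1'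
  set v : (Fin d → ℤ) → ℝ := fun x => g (x + z) - g x with hv
  have hvt : ∀ x, Tendsto (fun n => u (x + xs n)) U (𝓝 (v x)) := by
    intro x
    have := (hgT (x + z)).sub (hgT x)
    refine this.congr fun n => ?_
    simp only [hu, add_right_comm x z (xs n)]
  have hvs : ∀ x, v x ≤ s :=
    fun x => le_of_tendsto (hvt x) (Filter.Eventually.of_forall fun n => hus _)
  have hv0 : v 0 = s := by
    have t1 : Tendsto (fun n => u (0 + xs n)) U (𝓝 s) := by
      have : Tendsto (fun n => c n) atTop (𝓝 s) := hct
      have h2 : Tendsto (fun n => c n) U (𝓝 s) := this.mono_left hUle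
      refine h2.congr fun n => ?_
      simp [hxs n]
    exact tendsto_nhds_unique (hvt 0) t1
  have vharm : ∀ x, v x = ∑ z' ∈ T, p z' * v (x + z') := by
    intro x
    have e1 : ∑ z' ∈ T, p z' * g (x + z' + z) = g (x + z) := by
      rw [gharm (x + z)]
      exact Finset.sum_congr rfl fun z' _ => by rw [add_right_comm x z z']
    simp only [hv, mul_sub]
    rw [Finset.sum_sub_distrib, e1, ← gharm]
  have step : ∀ w, v w = s → v (w + z) = s := by
    intro w hw
    have h1 : ∑ z' ∈ T, p z' * (s - v (w + z')) = 0 := by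
      simp only [mul_sub]
      rw [Finset.sum_sub_distrib, ← Finset.sum_mul, hT1, one_mul, ← vharm w, hw, sub_self]
    have h2 : ∀ z' ∈ T, 0 ≤ p z' * (s - v (w + z')) :=
      fun z' _ => mul_nonneg (hnn z') (sub_nonneg.mpr (hvs _))
    have h3 := (Finset.sum_eq_zero_iff_of_nonneg h2).mp h1 z hzT
    have h4 : s - v (w + z) = 0 := by
      rcases mul_eq_zero.mp h3 with h | h
      · exact absurd h (ne_of_gt hz)
      · exact h
    linarith
  have vk : ∀ k : ℕ, v (k • z) = s := by
    intro k
    induction k with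
    | zero => simpa using hv0
    | succ k ih =>
      rw [succ_nsmul]
      exact step _ ih
  have gk : ∀ k : ℕ, g (k • z) = g 0 + k * s := by
    intro k
    induction k with
    | zero => simp
    | succ k ih =>
      have hvz := vk k
      have : g (k • z + z) = g (k • z) + s := by
        simp only [hv] at hvz; linarith
      rw [succ_nsmul, this, ih]
      push_cast
      ring
  have hsle : s ≤ 0 := by
    by_contra hpos
    push_neg at hpos
    obtain ⟨k, hk⟩ := exists_nat_gt ((M - g 0) / s)
    have h1 : M - g 0 < k * s := (div_lt_iff₀ hpos).mp hk
    have h2 : g (k • z) ≤ M := (abs_le.mp (hgM _)).2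
    rw [gk k] at h2
    linarith
  intro x
  have := le_trans (hus x) hsle
  simp only [hu] at this
  linarith

/-- Bounded harmonic functions of a strongly aperiodic random walk kernel on `ℤ^d`
are constant. -/
theorem bounded_harmonic_constant {d : ℕ}
    (p : (Fin d → ℤ) → ℝ)
    (hfin : (Function.support p).Finite)
    (hnn : ∀ x, 0 ≤ p x) (hlt : ∀ x, p x < 1)
    (hsum : ∑' x, p x = 1)
    (hgen : ∀ u : Fin d → ℤ,
      AddSubgroup.closure {y : Fin d → ℤ | ∃ x, 0 < p x ∧ y = u + x} = ⊤)
    (h : (Fin d → ℤ) → ℝ)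
    (hb : ∃ M, ∀ x, |h x| ≤ M)
    (hharm : ∀ x, h x = ∑' y, p (y - x) * h y) :
    ∀ x y, h x = h y := by
  obtain ⟨M, hbM⟩ := hb
  set T : Finset (Fin d → ℤ) := hfin.toFinset with hT
  have hT1 : ∑ z ∈ T, p z = 1 := by
    rw [← hsum]
    exact (tsum_eq_sum (fun x hx => by
      by_contra hne
      exact hx (hfin.mem_toFinset.mpr hne))).symm
  have harm : ∀ (f : (Fin d → ℤ) → ℝ),
      (∀ x, f x = ∑' y, p (y - x) * f y) →
      ∀ x, f x = ∑ z ∈ T, p z * f (x + z) := by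
    intro f hf x
    have hsupp : ∀ y ∉ T.image (fun z => x + z), p (y - x) * f y = 0 := by
      intro y hy
      by_contra hne
      have hpy : p (y - x) ≠ 0 := fun h0 => hne (by rw [h0, zero_mul])
      refine hy (Finset.mem_image.mpr ⟨y - x, hfin.mem_toFinset.mpr hpy, by abel⟩)
    have h1 : f x = ∑ y ∈ T.image (fun z => x + z), p (y - x) * f y := by
      rw [hf x]; exact tsum_eq_sum hsupp
    rw [h1, Finset.sum_image (fun a _ b _ hab => by simpa using hab)]
    refine Finset.sum_congr rfl fun z _ => ?_
    simp
  have harm_h := harm h hharm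
  have inv : ∀ z, 0 < p z → ∀ x, h (x + z) = h x := by
    intro z hz x
    have hzT : z ∈ T := hfin.mem_toFinset.mpr (ne_of_gt hz)
    have le1 := key_step T p hnn hT1 h M hbM harm_h z hzT hz x
    have harm_neg : ∀ x, (fun w => -h w) x = ∑ z' ∈ T, p z' * (fun w => -h w) (x + z') := by
      intro x
      simp only
      rw [harm_h x]
      rw [← Finset.sum_neg_distrib]
      exact Finset.sum_congr rfl fun z' _ => by ring
    have le2 := key_step T p hnn hT1 (fun w => -h w) M
      (fun x => by simpa using hbM x) harm_neg z hzT hz x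
    linarith
  set G : AddSubgroup (Fin d → ℤ) :=
    { carrier := {z | ∀ x, h (x + z) = h x}
      zero_mem' := by intro x; simp
      add_mem' := by
        intro a b ha hb x
        rw [← add_assoc, hb, ha]
      neg_mem' := by
        intro a ha x
        have := ha (x + -a)
        simpa using this.symm } with hG
  have hGtop : G = ⊤ := by
    refine top_unique ?_
    rw [← hgen 0]
    refine (AddSubgroup.closure_le G).mpr ?_
    rintro y ⟨w, hw, rfl⟩
    intro x
    simpa using inv w hw x
  intro x y
  have hy : y - x ∈ G := by rw [hGtop]; trivial
  have := hy x
  rw [show x + (y - x) = y by abel] at this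
  exact this.symm
end

section
/- For a strongly aperiodic, finitely supported random walk kernel p on ℤ^d with symmetrization q(x,y)=∑_z p(0,z)p(x,y+z), the second moment of the stationary increment Δ_0(x,y) = ∑_{k≥0} ∑_z ξ_{-k}(z)(p^k(y,z)−p^k(x,z)), where ξ are i.i.d. centered with variance σ_ξ², equals 2σ_ξ² a(x−y), where a(x) = ∑_{k≥0}[q^k(0,0) − q^k(x,0)] is the potential kernel of q. -/
open MeasureTheory ProbabilityTheory Filter Finsupp
open scoped ENNReal NNReal

set_option linter.unusedSectionVars false
set_option maxHeartbeats 1000000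

noncomputable instance IncAux.coeFunAMA {d : ℕ} :
    CoeFun (AddMonoidAlgebra ℝ (Fin d → ℤ)) (fun _ => (Fin d → ℤ) → ℝ) := ⟨fun f => ⇑f.coeff⟩

abbrev AddMonoidAlgebra.support {d : ℕ} (f : AddMonoidAlgebra ℝ (Fin d → ℤ)) :
    Finset (Fin d → ℤ) := f.coeff.support

noncomputable def iterK {d : ℕ} (p : (Fin d → ℤ) → ℝ) : ℕ → (Fin d → ℤ) → ℝ
  | 0 => fun x => if x = 0 then 1 else 0
  | (k+1) => fun x => ∑' z, p z * iterK p k (x - z)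

namespace IncAux

variable {d : ℕ}

local notation "G" => (Fin d → ℤ)

lemma mul_apply_sub (f g : AddMonoidAlgebra ℝ G) (x : G) :
    (f * g) x = ∑ z ∈ f.support, f z * g (x - z) := by
  classical
  rw [AddMonoidAlgebra.mul_apply]
  rw [Finsupp.sum]
  refine Finset.sum_congr rfl fun a _ => ?_
  rw [Finsupp.sum]
  have h1 : ∀ a₂ : G, (if a + a₂ = x then f a * g a₂ else 0)
      = if a₂ = x - a then f a * g a₂ else 0 := by
    intro a₂
    congr 1
    simp [eq_comm, eq_sub_iff_add_eq, add_comm]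
  simp_rw [h1]
  rw [Finset.sum_ite_eq' g.support (x - a) (fun a₂ => f a * g a₂)]
  by_cases h : x - a ∈ g.support
  · simp [h]
  · simp only [h, if_false]
    rw [Finsupp.notMem_support_iff.mp h, mul_zero]

lemma iterK_coe (F : AddMonoidAlgebra ℝ G) : ∀ (k : ℕ) (x : G),
    iterK (⇑F) k x = (F ^ k) x
  | 0, x => by
    simp [iterK, AddMonoidAlgebra.one_def, AddMonoidAlgebra.coeff_single, Finsupp.single_apply, eq_comm]
  | (k+1), x => by
    rw [iterK]; beta_reduce
    have h1 : ∀ z : G, F z * iterK (⇑F) k (x - z) = F z * (F ^ k) (x - z) := fun z => by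
      rw [iterK_coe F k]
    rw [tsum_congr h1, tsum_eq_sum (s := F.support)
      (fun z hz => by rw [Finsupp.notMem_support_iff.mp hz, zero_mul]),
      ← mul_apply_sub, ← pow_succ']

end IncAux

namespace IncAux

variable {d : ℕ}

local notation "G" => (Fin d → ℤ)

noncomputable def refl (F : AddMonoidAlgebra ℝ G) : AddMonoidAlgebra ℝ G :=
  AddMonoidAlgebra.domCongr ℝ ℝ (AddEquiv.neg G) F

lemma refl_apply (F : AddMonoidAlgebra ℝ G) (x : G) : refl F x = F (-x) := by
  simp [refl]

lemma sum_shift (F H : AddMonoidAlgebra ℝ G) (u v : G) :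
    ∑' z : G, F (z - u) * H (z - v) = (F * refl H) (v - u) := by
  classical
  rw [mul_apply_sub]
  have hs : ∀ z : G, z ∉ F.support.image (· + u) → F (z - u) * H (z - v) = 0 := by
    intro z hz
    have : F (z - u) = 0 := by
      by_contra h
      exact hz (Finset.mem_image.mpr ⟨z - u, Finsupp.mem_support_iff.mpr h, by abel⟩)
    rw [this, zero_mul]
  rw [tsum_eq_sum hs, Finset.sum_image (fun a _ b _ h => by simpa using h)]
  refine Finset.sum_congr rfl fun a _ => ?_
  rw [refl_apply]
  congr 1
  · congr 1; abel
  · congr 1; abel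

lemma sq_diff_sum (F : AddMonoidAlgebra ℝ G) (x y : G) :
    ∑' z : G, (F (z - y) - F (z - x))^2
      = 2 * ((F * refl F) 0 - (F * refl F) (x - y)) := by
  classical
  set s : Finset G := F.support.image (· + y) ∪ F.support.image (· + x) with hs
  have hmem : ∀ z : G, z ∉ s → F (z - y) = 0 ∧ F (z - x) = 0 := by
    intro z hz
    constructor
    · by_contra h
      exact hz (Finset.mem_union_left _
        (Finset.mem_image.mpr ⟨z - y, Finsupp.mem_support_iff.mpr h, by abel⟩))
    · by_contra h
      exact hz (Finset.mem_union_right _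
        (Finset.mem_image.mpr ⟨z - x, Finsupp.mem_support_iff.mpr h, by abel⟩))
  have h1 : ∑' z : G, (F (z - y) - F (z - x))^2
      = ∑ z ∈ s, (F (z - y) - F (z - x))^2 :=
    tsum_eq_sum (fun z hz => by rw [(hmem z hz).1, (hmem z hz).2]; ring)
  have hAA : ∑ z ∈ s, F (z - y) * F (z - y) = (F * refl F) 0 := by
    rw [← tsum_eq_sum (L := SummationFilter.unconditional _) (fun z hz => by rw [(hmem z hz).1]; ring), sum_shift]
    norm_num
  have hAB : ∑ z ∈ s, F (z - y) * F (z - x) = (F * refl F) (x - y) := by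
    rw [← tsum_eq_sum (L := SummationFilter.unconditional _) (fun z hz => by rw [(hmem z hz).1]; ring), sum_shift]
  have hBB : ∑ z ∈ s, F (z - x) * F (z - x) = (F * refl F) 0 := by
    rw [← tsum_eq_sum (L := SummationFilter.unconditional _) (fun z hz => by rw [(hmem z hz).2]; ring), sum_shift]
    norm_num
  have h2 : ∀ z : G, (F (z - y) - F (z - x))^2
      = F (z - y) * F (z - y) - 2 * (F (z - y) * F (z - x)) + F (z - x) * F (z - x) := by
    intro z; ring
  rw [h1]
  simp_rw [h2]
  rw [Finset.sum_add_distrib, Finset.sum_sub_distrib, ← Finset.mul_sum, hAA, hAB, hBB]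
  ring
end IncAux

namespace IncAux
variable {d : ℕ}
local notation "G" => (Fin d → ℤ)

lemma refl_refl (F : AddMonoidAlgebra ℝ G) : refl (refl F) = F := by
  ext z
  simp [refl_apply]

lemma refl_mul (F H : AddMonoidAlgebra ℝ G) : refl (F * H) = refl F * refl H := by
  unfold refl; exact map_mul _ _ _

lemma mulrefl_neg (F : AddMonoidAlgebra ℝ G) (x : G) :
    (F * refl F) (-x) = (F * refl F) x := by
  have h1 : refl (F * refl F) = F * refl F := by
    rw [refl_mul, refl_refl, mul_comm]
  calc (F * refl F) (-x) = refl (F * refl F) x := (refl_apply _ x).symm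
  _ = (F * refl F) x := by rw [h1]

lemma mulrefl_pow (F : AddMonoidAlgebra ℝ G) (k : ℕ) :
    (F * refl F) ^ k = F ^ k * refl (F ^ k) := by
  rw [mul_pow]
  congr 1
  unfold refl
  rw [map_pow]

end IncAux

namespace IncAux

variable {Ω : Type*} [MeasureSpace Ω] [IsProbabilityMeasure (ℙ : Measure Ω)]

lemma memLp_mul_integrable {f g : Ω → ℝ} (hf : MemLp f 2) (hg : MemLp g 2) :
    Integrable (fun ω => f ω * g ω) := by
  rw [← memLp_one_iff_integrable]
  have := hf.smul (φ := g) hg (p := 2) (q := 2) (r := 1)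
  exact (by simpa [smul_eq_mul, mul_comm] using this : MemLp (f * g) 1 ℙ)

lemma integral_sq_sum {ι : Type*} [DecidableEq ι] (s : Finset ι) (g : ι → Ω → ℝ)
    (h2 : ∀ i, MemLp (g i) 2)
    (hcross : ∀ i ∈ s, ∀ j ∈ s, i ≠ j → ∫ ω, g i ω * g j ω = 0) :
    ∫ ω, (∑ i ∈ s, g i ω)^2 = ∑ i ∈ s, ∫ ω, (g i ω)^2 := by
  have hint : ∀ i j : ι, Integrable (fun ω => g i ω * g j ω) :=
    fun i j => memLp_mul_integrable (h2 i) (h2 j)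
  have hexp : ∀ ω, (∑ i ∈ s, g i ω)^2 = ∑ i ∈ s, ∑ j ∈ s, g i ω * g j ω := by
    intro ω
    rw [sq, Finset.sum_mul_sum]
  simp_rw [hexp]
  rw [integral_finset_sum s (fun i _ => integrable_finset_sum s (fun j _ => hint i j))]
  refine Finset.sum_congr rfl fun i hi => ?_
  rw [integral_finset_sum s (fun j _ => hint i j)]
  rw [Finset.sum_eq_single_of_mem i hi (fun j hj hne => hcross i hi j hj (Ne.symm hne))]
  simp_rw [sq]

lemma integral_sq_eq (f : Ω → ℝ) (hf : MemLp f 2) :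
    ∫ ω, (f ω)^2 = ((eLpNorm f 2 ℙ).toReal)^2 := by
  rw [hf.eLpNorm_eq_integral_rpow_norm two_ne_zero ENNReal.ofNat_ne_top,
    ENNReal.toReal_ofReal (by positivity)]
  have hnn : 0 ≤ ∫ ω, ‖f ω‖ ^ (2:ℝ≥0∞).toReal ∂(ℙ : Measure Ω) :=
    integral_nonneg fun ω => by positivity
  rw [← Real.rpow_natCast _ 2, ← Real.rpow_mul hnn]
  norm_num

end IncAux

namespace IncAux2
open IncAux
variable {Ω : Type*} [MeasureSpace Ω] [IsProbabilityMeasure (ℙ : Measure Ω)]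

lemma tendsto_integral_sq (S : ℕ → Ω → ℝ) (Δ : Ω → ℝ) (hS : ∀ m, MemLp (S m) 2) (hΔ : MemLp Δ 2)
    (hlim : Tendsto (fun m => eLpNorm (fun ω => S m ω - Δ ω) 2 ℙ) atTop (nhds 0)) :
    Tendsto (fun m => ∫ ω, (S m ω)^2) atTop (nhds (∫ ω, (Δ ω)^2)) := by
  have hE : ∀ m, MemLp (fun ω => S m ω - Δ ω) 2 (ℙ : Measure Ω) := fun m => (hS m).sub hΔ
  have he : Tendsto (fun m => (eLpNorm (fun ω => S m ω - Δ ω) 2 ℙ).toReal) atTop (nhds 0) := by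
    have := (ENNReal.tendsto_toReal (ENNReal.zero_ne_top)).comp hlim
    simpa [Function.comp_def] using this
  have hbound : ∀ m, |(eLpNorm (S m) 2 ℙ).toReal - (eLpNorm Δ 2 ℙ).toReal|
      ≤ (eLpNorm (fun ω => S m ω - Δ ω) 2 ℙ).toReal := by
    intro m
    have hA := (hS m).eLpNorm_ne_top
    have hB := hΔ.eLpNorm_ne_top
    have hEm := (hE m).eLpNorm_ne_top
    have tri1 : eLpNorm (S m) 2 ℙ ≤ eLpNorm (fun ω => S m ω - Δ ω) 2 ℙ + eLpNorm Δ 2 ℙ := by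
      have h := eLpNorm_add_le (hE m).aestronglyMeasurable hΔ.aestronglyMeasurable
        (one_le_two : (1:ℝ≥0∞) ≤ 2)
      have h4 : ((fun ω => S m ω - Δ ω) + Δ) = S m := by funext ω; simp
      rwa [h4] at h
    have tri2 : eLpNorm Δ 2 ℙ ≤ eLpNorm (fun ω => S m ω - Δ ω) 2 ℙ + eLpNorm (S m) 2 ℙ := by
      have h := eLpNorm_add_le (hΔ.sub (hS m)).aestronglyMeasurable
        (hS m).aestronglyMeasurable (one_le_two : (1:ℝ≥0∞) ≤ 2)
      have h2 : (Δ - S m + S m) = Δ := by funext ω; simp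
      rw [h2] at h
      have h3 : eLpNorm (Δ - S m) 2 ℙ = eLpNorm (fun ω => S m ω - Δ ω) 2 ℙ :=
        eLpNorm_sub_comm Δ (S m) 2 ℙ
      rwa [h3] at h
    have t1 : (eLpNorm (S m) 2 ℙ).toReal ≤ (eLpNorm (fun ω => S m ω - Δ ω) 2 ℙ).toReal
        + (eLpNorm Δ 2 ℙ).toReal := by
      have := ENNReal.toReal_mono (by finiteness) tri1
      rwa [ENNReal.toReal_add hEm hB] at this
    have t2 : (eLpNorm Δ 2 ℙ).toReal ≤ (eLpNorm (fun ω => S m ω - Δ ω) 2 ℙ).toReal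
        + (eLpNorm (S m) 2 ℙ).toReal := by
      have := ENNReal.toReal_mono (by finiteness) tri2
      rwa [ENNReal.toReal_add hEm hA] at this
    rw [abs_sub_le_iff]
    constructor <;> linarith
  have hnorm : Tendsto (fun m => (eLpNorm (S m) 2 ℙ).toReal) atTop
      (nhds ((eLpNorm Δ 2 ℙ).toReal)) := by
    rw [tendsto_iff_dist_tendsto_zero]
    refine squeeze_zero (fun m => dist_nonneg) (fun m => ?_) he
    rw [Real.dist_eq]
    exact hbound m
  have hfin : (fun m => ∫ ω, (S m ω)^2) = fun m => ((eLpNorm (S m) 2 ℙ).toReal)^2 := by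
    funext m; exact integral_sq_eq (S m) (hS m)
  rw [hfin, integral_sq_eq Δ hΔ]
  exact hnorm.pow 2
end IncAux2


/-- Second moment of the stationary increment
`Δ_0(x,y) = ∑_{k≥0} ∑_z ξ_{-k}(z) (p^k(y,z) − p^k(x,z))` of the harness process:
it equals `2 σ_ξ² a(x−y)` where `a` is the potential kernel of the symmetrization
`q` of `p`. Here `Δ` is given as the `L²` limit of the partial sums over `k`. -/
theorem increment_second_moment {d : ℕ}
    (p : (Fin d → ℤ) → ℝ)
    (hfin : (Function.support p).Finite)
    (hnn : ∀ x, 0 ≤ p x) (hsum : ∑' x, p x = 1)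
    (hgen : ∀ u : Fin d → ℤ,
      AddSubgroup.closure {y : Fin d → ℤ | ∃ x, 0 < p x ∧ y = u + x} = ⊤)
    (q : (Fin d → ℤ) → ℝ) (hq : ∀ x, q x = ∑' z, p z * p (x + z))
    (a : (Fin d → ℤ) → ℝ)
    (ha : ∀ x, a x = ∑' k : ℕ, (iterK q k 0 - iterK q k x))
    {Ω : Type*} [MeasureSpace Ω] [IsProbabilityMeasure (ℙ : Measure Ω)]
    (ξ : ℕ → (Fin d → ℤ) → Ω → ℝ)
    (hmeas : ∀ k z, Measurable (ξ k z))
    (hind : iIndepFun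
        (fun kz : ℕ × (Fin d → ℤ) => ξ kz.1 kz.2))
    (hident : ∀ k z, IdentDistrib (ξ k z) (ξ 0 0))
    (hmean : ∫ ω, ξ 0 0 ω = 0)
    (hL2 : MemLp (ξ 0 0) 2)
    (σξ2 : ℝ) (hvar : ∫ ω, (ξ 0 0 ω)^2 = σξ2)
    (x y : Fin d → ℤ)
    (Δ : Ω → ℝ) (hΔ : MemLp Δ 2)
    (hlim : Tendsto (fun m : ℕ =>
        eLpNorm (fun ω =>
          (∑ k ∈ Finset.range m,
            ∑' z, ξ k z ω * (iterK p k (z - y) - iterK p k (z - x))) - Δ ω) 2 ℙ)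
      atTop (nhds 0)) :
    ∫ ω, (Δ ω)^2 = 2 * σξ2 * a (x - y) := by
  classical
  -- the kernel as a finitely supported function
  set P : AddMonoidAlgebra ℝ (Fin d → ℤ) :=
    .ofCoeff ⟨hfin.toFinset, p, fun a => by
      simp [Set.Finite.mem_toFinset, Function.mem_support]⟩ with hPdef
  have hPcoe : ⇑P = p := rfl
  have hp_eq : ∀ (k : ℕ) (z : Fin d → ℤ), iterK p k z = (P ^ k) z := by
    intro k z
    rw [← hPcoe]
    exact IncAux.iterK_coe P k z
  -- the symmetrization
  have hq' : ∀ w, q w = (P * IncAux.refl P) w := by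
    intro w
    rw [hq w]
    have e : (Fin d → ℤ) ≃ (Fin d → ℤ) := Equiv.addRight w
    have h1 : ∀ z : Fin d → ℤ, p z * p (w + z) = P ((z + w) - w) * P ((z + w) - 0) := by
      intro z
      rw [hPcoe]
      congr 2
      · abel
      · abel
    rw [tsum_congr h1]
    have h2 := (Equiv.addRight w).tsum_eq (fun u => P (u - w) * P (u - 0))
    rw [show (fun z : Fin d → ℤ => P ((z + w) - w) * P ((z + w) - 0))
        = (fun z => (fun u => P (u - w) * P (u - 0)) ((Equiv.addRight w) z)) from rfl]
    rw [h2, IncAux.sum_shift P P w 0]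
    rw [zero_sub, IncAux.mulrefl_neg]
  have hqcoe : q = ⇑(P * IncAux.refl P) := funext hq'
  have hq_eq : ∀ (k : ℕ) (w : Fin d → ℤ), iterK q k w = (P ^ k * IncAux.refl (P ^ k)) w := by
    intro k w
    rw [hqcoe, IncAux.iterK_coe (P * IncAux.refl P) k w, IncAux.mulrefl_pow]
  -- coefficients and their supports
  set sFin : ℕ → Finset (Fin d → ℤ) := fun k =>
    (P ^ k).support.image (· + y) ∪ (P ^ k).support.image (· + x) with hsFin
  have hc0 : ∀ (k : ℕ) (z : Fin d → ℤ), z ∉ sFin k →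
      iterK p k (z - y) - iterK p k (z - x) = 0 := by
    intro k z hz
    have h1 : iterK p k (z - y) = 0 := by
      rw [hp_eq]
      by_contra h
      exact hz (Finset.mem_union_left _
        (Finset.mem_image.mpr ⟨z - y, Finsupp.mem_support_iff.mpr h, by abel⟩))
    have h2 : iterK p k (z - x) = 0 := by
      rw [hp_eq]
      by_contra h
      exact hz (Finset.mem_union_right _
        (Finset.mem_image.mpr ⟨z - x, Finsupp.mem_support_iff.mpr h, by abel⟩))
    rw [h1, h2, sub_zero]
  have hT : ∀ (k : ℕ) (ω : Ω),
      (∑' z, ξ k z ω * (iterK p k (z - y) - iterK p k (z - x)))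
      = ∑ z ∈ sFin k, ξ k z ω * (iterK p k (z - y) - iterK p k (z - x)) := by
    intro k ω
    exact tsum_eq_sum (fun z hz => by rw [hc0 k z hz, mul_zero])
  -- membership in L²
  have hξL2 : ∀ (k : ℕ) (z : Fin d → ℤ), MemLp (ξ k z) 2 (ℙ : Measure Ω) :=
    fun k z => (hident k z).symm.memLp_snd hL2
  have hSmem : ∀ m : ℕ, MemLp (fun ω =>
      ∑ k ∈ Finset.range m,
        ∑' z, ξ k z ω * (iterK p k (z - y) - iterK p k (z - x))) 2 (ℙ : Measure Ω) := by
    intro m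
    have : (fun ω => ∑ k ∈ Finset.range m,
        ∑' z, ξ k z ω * (iterK p k (z - y) - iterK p k (z - x)))
        = fun ω => ∑ k ∈ Finset.range m,
          ∑ z ∈ sFin k, ξ k z ω * (iterK p k (z - y) - iterK p k (z - x)) := by
      funext ω
      exact Finset.sum_congr rfl fun k _ => hT k ω
    rw [this]
    exact memLp_finsetSum _ (fun k _ => memLp_finsetSum _
      (fun z _ => by
        simpa [mul_comm] using (hξL2 k z).const_mul
          (iterK p k (z - y) - iterK p k (z - x))))
  -- variance of the k-th layer
  set v : ℕ → ℝ := fun k => ∑' z, (iterK p k (z - y) - iterK p k (z - x))^2 with hv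
  have hvdef : ∀ k, v k = ∑' z, (iterK p k (z - y) - iterK p k (z - x))^2 := fun k => rfl
  have hv_nonneg : ∀ k, 0 ≤ v k := fun k => tsum_nonneg (fun z => sq_nonneg _)
  have hv_eq : ∀ k, v k = 2 * (iterK q k 0 - iterK q k (x - y)) := by
    intro k
    have h1 : v k = ∑' z, ((P ^ k) (z - y) - (P ^ k) (z - x))^2 := by
      rw [hvdef]
      exact tsum_congr fun z => by rw [hp_eq, hp_eq]
    rw [h1, IncAux.sq_diff_sum (P ^ k) x y, hq_eq, hq_eq]
  -- the second moment of the partial sums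
  have key : ∀ m : ℕ, (∫ ω, (∑ k ∈ Finset.range m,
      ∑' z, ξ k z ω * (iterK p k (z - y) - iterK p k (z - x)))^2)
      = σξ2 * ∑ k ∈ Finset.range m, v k := by
    intro m
    set s' : Finset (Fin d → ℤ) := (Finset.range m).biUnion sFin with hs'
    have hsub : ∀ k ∈ Finset.range m, sFin k ⊆ s' :=
      fun k hk => Finset.subset_biUnion_of_mem sFin hk
    have hrw : ∀ ω : Ω, (∑ k ∈ Finset.range m,
        ∑' z, ξ k z ω * (iterK p k (z - y) - iterK p k (z - x)))
        = ∑ i ∈ (Finset.range m) ×ˢ s',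
            ξ i.1 i.2 ω * (iterK p i.1 (i.2 - y) - iterK p i.1 (i.2 - x)) := by
      intro ω
      rw [Finset.sum_product]
      refine Finset.sum_congr rfl fun k hk => ?_
      rw [hT k ω]
      refine Finset.sum_subset (hsub k hk) ?_
      intro z _ hz
      rw [hc0 k z hz, mul_zero]
    simp_rw [hrw]
    rw [IncAux.integral_sq_sum ((Finset.range m) ×ˢ s')
      (fun i ω => ξ i.1 i.2 ω * (iterK p i.1 (i.2 - y) - iterK p i.1 (i.2 - x)))
      (fun i => by
        simpa [mul_comm] using (hξL2 i.1 i.2).const_mul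
          (iterK p i.1 (i.2 - y) - iterK p i.1 (i.2 - x))) ?cross]
    case cross =>
      intro i _ j _ hij
      have hprod : (fun ω => (ξ i.1 i.2 ω * (iterK p i.1 (i.2 - y) - iterK p i.1 (i.2 - x)))
          * (ξ j.1 j.2 ω * (iterK p j.1 (j.2 - y) - iterK p j.1 (j.2 - x))))
          = fun ω => ((iterK p i.1 (i.2 - y) - iterK p i.1 (i.2 - x))
            * (iterK p j.1 (j.2 - y) - iterK p j.1 (j.2 - x)))
            * (ξ i.1 i.2 ω * ξ j.1 j.2 ω) := by
        funext ω; ring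
      rw [hprod, integral_const_mul]
      have hindep : IndepFun (ξ i.1 i.2) (ξ j.1 j.2) (ℙ : Measure Ω) :=
        hind.indepFun hij
      rw [hindep.integral_fun_mul_eq_mul_integral (hmeas i.1 i.2).aestronglyMeasurable
        (hmeas j.1 j.2).aestronglyMeasurable]
      have hm1 : ∫ ω, ξ i.1 i.2 ω = 0 := by rw [(hident i.1 i.2).integral_eq, hmean]
      rw [hm1, zero_mul, mul_zero]
    -- diagonal terms
    have hdiag : ∀ i : ℕ × (Fin d → ℤ),
        (∫ ω, (ξ i.1 i.2 ω * (iterK p i.1 (i.2 - y) - iterK p i.1 (i.2 - x)))^2)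
        = (iterK p i.1 (i.2 - y) - iterK p i.1 (i.2 - x))^2 * σξ2 := by
      intro i
      have h1 : (fun ω => (ξ i.1 i.2 ω * (iterK p i.1 (i.2 - y) - iterK p i.1 (i.2 - x)))^2)
          = fun ω => (iterK p i.1 (i.2 - y) - iterK p i.1 (i.2 - x))^2 * (ξ i.1 i.2 ω)^2 := by
        funext ω; ring
      rw [h1, integral_const_mul]
      have h2 : ∫ ω, (ξ i.1 i.2 ω)^2 = σξ2 := by
        have h3 := ((hident i.1 i.2).comp (measurable_id.pow_const 2)).integral_eq
        rw [← hvar]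
        exact h3
      rw [h2]
    simp_rw [hdiag]
    rw [Finset.sum_product]
    have hinner : ∀ k ∈ Finset.range m,
        (∑ z ∈ s', (iterK p k (z - y) - iterK p k (z - x))^2 * σξ2) = v k * σξ2 := by
      intro k hk
      rw [← Finset.sum_mul]
      congr 1
      rw [hvdef]
      rw [tsum_eq_sum (s := s') (fun z hz => ?_)]
      · rw [hc0 k z (fun hmem => hz (hsub k hk hmem)), zero_pow two_ne_zero]
    rw [Finset.sum_congr rfl hinner, ← Finset.sum_mul, mul_comm]
  -- pass to the limit
  have hmain := IncAux2.tendsto_integral_sq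
    (fun m ω => ∑ k ∈ Finset.range m,
      ∑' z, ξ k z ω * (iterK p k (z - y) - iterK p k (z - x))) Δ hSmem hΔ hlim
  have hmain2 : Tendsto (fun m => σξ2 * ∑ k ∈ Finset.range m, v k) atTop
      (nhds (∫ ω, (Δ ω)^2)) := by
    have : (fun m => σξ2 * ∑ k ∈ Finset.range m, v k)
        = fun m => ∫ ω, (∑ k ∈ Finset.range m,
          ∑' z, ξ k z ω * (iterK p k (z - y) - iterK p k (z - x)))^2 := by
      funext m; rw [key m]
    rw [this]
    exact hmain
  -- final computation
  by_cases hσ : σξ2 = 0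
  · have h0 : (fun m : ℕ => σξ2 * ∑ k ∈ Finset.range m, v k) = fun _ => (0:ℝ) := by
      funext m; rw [hσ, zero_mul]
    rw [h0] at hmain2
    have := tendsto_nhds_unique hmain2 tendsto_const_nhds
    rw [this, hσ]
    ring
  · have htv : Tendsto (fun m => ∑ k ∈ Finset.range m, v k) atTop
        (nhds ((∫ ω, (Δ ω)^2) / σξ2)) := by
      have := hmain2.const_mul (σξ2⁻¹)
      simp_rw [← mul_assoc, inv_mul_cancel₀ hσ, one_mul] at this
      rw [div_eq_inv_mul]
      exact this
    have hhs : HasSum v ((∫ ω, (Δ ω)^2) / σξ2) :=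
      (hasSum_iff_tendsto_nat_of_nonneg hv_nonneg _).mpr htv
    have hhs2 : HasSum (fun k => iterK q k 0 - iterK q k (x - y))
        ((∫ ω, (Δ ω)^2) / σξ2 / 2) := by
      have := hhs.div_const 2
      have heq : (fun k => v k / 2) = fun k => iterK q k 0 - iterK q k (x - y) := by
        funext k; rw [hv_eq k]; ring
      rwa [heq] at this
    rw [ha, hhs2.tsum_eq]
    field_simp
end

section
/- With Ψ as above, for s,t > 0 and q,r ∈ ℝ: ∫_{−∞}^0 P(B_{σ²s} > q−x) P(B_{σ²t} > r−x) dx + ∫_0^∞ P(B_{σ²s} ≤ q−x) P(B_{σ²t} ≤ r−x) dx = Ψ_{σ²s}(−q) + Ψ_{σ²t}(r) − Ψ_{σ²(t+s)}(r−q). -/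
open MeasureTheory Real
open scoped ENNReal

noncomputable def gpdf (v x : ℝ) : ℝ :=
  (2 * π * v) ^ (-(1/2 : ℝ)) * Real.exp (-(x^2) / (2 * v))

noncomputable def gcdf (v x : ℝ) : ℝ := ∫ y in Set.Iic x, gpdf v y

noncomputable def gPsi (v x : ℝ) : ℝ := v * gpdf v x - x * (1 - gcdf v x)

lemma gpdf_nonneg {v : ℝ} (hv : 0 < v) (x : ℝ) : 0 ≤ gpdf v x := by
  unfold gpdf
  positivity

lemma gpdf_neg (v x : ℝ) : gpdf v (-x) = gpdf v x := by
  simp [gpdf, neg_sq]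

lemma continuous_gpdf (v : ℝ) : Continuous (gpdf v) := by
  unfold gpdf
  fun_prop

lemma integrable_gpdf {v : ℝ} (hv : 0 < v) : Integrable (gpdf v) := by
  have h : ∀ x, gpdf v x = (2 * π * v) ^ (-(1/2 : ℝ)) * Real.exp (-(2*v)⁻¹ * x ^ 2) := by
    intro x; unfold gpdf; ring_nf
  rw [funext h]
  exact (integrable_exp_neg_mul_sq (by positivity)).const_mul _

lemma integral_gpdf {v : ℝ} (hv : 0 < v) : ∫ x, gpdf v x = 1 := by
  have h : ∀ x, gpdf v x = (2 * π * v) ^ (-(1/2 : ℝ)) * Real.exp (-(2*v)⁻¹ * x ^ 2) := by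
    intro x; unfold gpdf; ring_nf
  rw [funext h, integral_const_mul, integral_gaussian]
  have h2 : π / (2*v)⁻¹ = 2 * π * v := by field_simp
  rw [h2, Real.sqrt_eq_rpow, ← Real.rpow_add (by positivity)]
  norm_num

lemma lintegral_gpdf {v : ℝ} (hv : 0 < v) :
    ∫⁻ x, ENNReal.ofReal (gpdf v x) = 1 := by
  rw [← ofReal_integral_eq_lintegral_ofReal (integrable_gpdf hv)
    (Filter.Eventually.of_forall (gpdf_nonneg hv)), integral_gpdf hv, ENNReal.ofReal_one]

lemma integral_Ioi_gpdf {v : ℝ} (hv : 0 < v) (c : ℝ) :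
    ∫ y in Set.Ioi c, gpdf v y = 1 - gcdf v c := by
  have := integral_add_compl (measurableSet_Iic (a := c)) (integrable_gpdf hv)
  rw [Set.compl_Iic] at this
  have h2 : gcdf v c + ∫ y in Set.Ioi c, gpdf v y = 1 := by
    rw [gcdf, this, integral_gpdf hv]
  linarith

lemma gcdf_nonneg {v : ℝ} (hv : 0 < v) (x : ℝ) : 0 ≤ gcdf v x :=
  setIntegral_nonneg measurableSet_Iic (fun y _ => gpdf_nonneg hv y)

lemma one_sub_gcdf_nonneg {v : ℝ} (hv : 0 < v) (x : ℝ) : 0 ≤ 1 - gcdf v x := by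
  rw [← integral_Ioi_gpdf hv]
  exact setIntegral_nonneg measurableSet_Ioi (fun y _ => gpdf_nonneg hv y)

lemma measurable_gcdf {v : ℝ} (hv : 0 < v) : Measurable (gcdf v) := by
  have : Monotone (gcdf v) := by
    intro a b hab
    exact setIntegral_mono_set (integrable_gpdf hv).integrableOn
      (Filter.Eventually.of_forall (gpdf_nonneg hv))
      (HasSubset.Subset.eventuallyLE (Set.Iic_subset_Iic.mpr hab))
  exact this.measurable

lemma integrable_id_mul_gpdf {v : ℝ} (hv : 0 < v) :
    Integrable (fun y : ℝ => y * gpdf v y) := by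
  have h : ∀ y : ℝ, y * gpdf v y =
      (2 * π * v) ^ (-(1/2 : ℝ)) * (y * Real.exp (-(2*v)⁻¹ * y ^ 2)) := by
    intro y; unfold gpdf; ring_nf
  rw [funext h]
  exact (integrable_mul_exp_neg_mul_sq (by positivity)).const_mul _

lemma integrable_max_mul_gpdf {v : ℝ} (hv : 0 < v) (c : ℝ) :
    Integrable (fun y => max (y - c) 0 * gpdf v y) := by
  have hbound : Integrable (fun y : ℝ => |y * gpdf v y| + |c| * gpdf v y) :=
    (integrable_id_mul_gpdf hv).abs.add ((integrable_gpdf hv).const_mul _)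
  refine hbound.mono' ?_ ?_
  · exact (((measurable_id.sub_const c).max measurable_const).mul
      (continuous_gpdf v).measurable).aestronglyMeasurable
  · refine Filter.Eventually.of_forall fun y => ?_
    have h1 : 0 ≤ max (y - c) 0 * gpdf v y :=
      mul_nonneg (le_max_right _ _) (gpdf_nonneg hv y)
    rw [Real.norm_eq_abs, abs_of_nonneg h1, abs_mul]
    have h2 : max (y - c) 0 ≤ |y| + |c| := by
      rcases le_total (y - c) 0 with h | h
      · rw [max_eq_right h]; positivity
      · rw [max_eq_left h]
        calc y - c ≤ |y| + |(-c)| := by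
              have := abs_add_le y (-c); simpa [sub_eq_add_neg] using (le_abs_self _).trans this
          _ = |y| + |c| := by rw [abs_neg]
    calc max (y - c) 0 * gpdf v y ≤ (|y| + |c|) * gpdf v y :=
          mul_le_mul_of_nonneg_right h2 (gpdf_nonneg hv y)
      _ = |y| * gpdf v y + |c| * gpdf v y := by ring
      _ ≤ |y| * |gpdf v y| + |c| * gpdf v y := by
          rw [abs_of_nonneg (gpdf_nonneg hv y)]

lemma integral_Ioi_id_mul_gpdf {v : ℝ} (hv : 0 < v) (c : ℝ) :
    ∫ y in Set.Ioi c, y * gpdf v y = v * gpdf v c := by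
  have hderiv : ∀ x ∈ Set.Ici c, HasDerivAt (fun y => -v * gpdf v y) (x * gpdf v x) x := by
    intro x _
    have h1 : HasDerivAt (fun y : ℝ => -(y^2) / (2*v)) (-x / v) x := by
      have := ((hasDerivAt_pow 2 x).neg).div_const (2*v)
      refine this.congr_deriv ?_
      field_simp
      ring
    have h2 : HasDerivAt (fun y : ℝ => Real.exp (-(y^2) / (2*v)))
        (Real.exp (-(x^2) / (2*v)) * (-x / v)) x := (Real.hasDerivAt_exp _).comp x h1
    have h3 := (h2.const_mul ((2 * π * v) ^ (-(1/2 : ℝ)))).const_mul (-v)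
    refine h3.congr_deriv ?_
    unfold gpdf
    field_simp
  have hint : IntegrableOn (fun y => y * gpdf v y) (Set.Ioi c) :=
    (integrable_id_mul_gpdf hv).integrableOn
  have htend : Filter.Tendsto (fun y => -v * gpdf v y) Filter.atTop (nhds 0) := by
    have h0 : Filter.Tendsto (fun y : ℝ => -(y^2) / (2*v)) Filter.atTop Filter.atBot := by
      have h1 : Filter.Tendsto (fun y : ℝ => y^2 / (2*v)) Filter.atTop Filter.atTop :=
        (Filter.tendsto_pow_atTop two_ne_zero).atTop_div_const (by positivity)
      have h2 := Filter.tendsto_neg_atTop_atBot.comp h1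
      simpa [Function.comp_def, neg_div] using h2
    have h1 : Filter.Tendsto (fun y : ℝ => Real.exp (-(y^2) / (2*v))) Filter.atTop (nhds 0) :=
      Real.tendsto_exp_atBot.comp h0
    have h2 := ((h1.const_mul ((2 * π * v) ^ (-(1/2 : ℝ)))).const_mul (-v))
    simpa [gpdf] using h2
  have := integral_Ioi_of_hasDerivAt_of_tendsto' hderiv hint htend
  rw [this]
  unfold gpdf
  ring

lemma integral_max_mul_gpdf {v : ℝ} (hv : 0 < v) (c : ℝ) :
    ∫ y, max (y - c) 0 * gpdf v y = gPsi v c := by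
  have h1 : (fun y => max (y - c) 0 * gpdf v y)
      = Set.indicator (Set.Ioi c) (fun y => (y - c) * gpdf v y) := by
    funext y
    rcases lt_or_ge c y with h | h
    · rw [Set.indicator_of_mem (Set.mem_Ioi.mpr h), max_eq_left (by linarith)]
    · rw [Set.indicator_of_notMem (by simpa using h), max_eq_right (by linarith), zero_mul]
  rw [h1, integral_indicator measurableSet_Ioi]
  have h2 : ∀ y : ℝ, (y - c) * gpdf v y = y * gpdf v y - c * gpdf v y := fun y => by ring
  rw [funext h2, integral_sub (integrable_id_mul_gpdf hv).integrableOn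
    (((integrable_gpdf hv).const_mul c).integrableOn),
    integral_Ioi_id_mul_gpdf hv c]
  rw [integral_const_mul, integral_Ioi_gpdf hv]
  rfl

lemma gPsi_nonneg {v : ℝ} (hv : 0 < v) (c : ℝ) : 0 ≤ gPsi v c := by
  rw [← integral_max_mul_gpdf hv c]
  exact integral_nonneg fun y => mul_nonneg (le_max_right _ _) (gpdf_nonneg hv y)

lemma key_identity (a b : ℝ) :
    max (min a b) 0 + max (min (-a) (-b)) 0 + max (b - a) 0
      = max (-a) 0 + max b 0 := by
  rcases le_total a b with h | h <;>
    rcases le_total a 0 with h1 | h1 <;>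
      rcases le_total b 0 with h2 | h2 <;>
        simp [min_def, max_def] <;> split_ifs <;> linarith

lemma gpdf_conv_pointwise {u v : ℝ} (hu : 0 < u) (hv : 0 < v) (w y : ℝ) :
    gpdf u y * gpdf v (w + y)
      = gpdf (u + v) w * gpdf (u * v / (u + v)) (y + u * w / (u + v)) := by
  unfold gpdf
  rw [mul_mul_mul_comm, ← Real.exp_add, mul_mul_mul_comm, ← Real.exp_add,
    ← Real.mul_rpow (by positivity) (by positivity),
    ← Real.mul_rpow (by positivity) (by positivity)]
  have e1 : (2*π*u) * (2*π*v) = 2*π*(u+v) * (2*π*(u*v/(u+v))) := by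
    field_simp
  have e2 : -(y^2)/(2*u) + -((w+y)^2)/(2*v)
      = -(w^2)/(2*(u+v)) + -((y + u*w/(u+v))^2)/(2*(u*v/(u+v))) := by
    field_simp
    ring
  rw [e1, e2]

/-- ENNReal-valued Gaussian kernel. -/
noncomputable def gk (v y : ℝ) : ℝ≥0∞ := ENNReal.ofReal (gpdf v y)

lemma measurable_gk (v : ℝ) : Measurable (gk v) :=
  ENNReal.measurable_ofReal.comp (continuous_gpdf v).measurable

lemma lintegral_gk {v : ℝ} (hv : 0 < v) : ∫⁻ y, gk v y = 1 := lintegral_gpdf hv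

lemma ofReal_max_zero (t : ℝ) : ENNReal.ofReal (max t 0) = ENNReal.ofReal t := by
  rcases le_total t 0 with h | h
  · rw [max_eq_right h, ENNReal.ofReal_zero, eq_comm, ENNReal.ofReal_eq_zero]
    exact h
  · rw [max_eq_left h]

lemma lint_psi {v : ℝ} (hv : 0 < v) (c : ℝ) :
    ∫⁻ y, gk v y * ENNReal.ofReal (max (y - c) 0) = ENNReal.ofReal (gPsi v c) := by
  have h : ∀ y, gk v y * ENNReal.ofReal (max (y - c) 0)
      = ENNReal.ofReal (max (y - c) 0 * gpdf v y) := by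
    intro y
    rw [ENNReal.ofReal_mul (le_max_right _ _), mul_comm]
    rfl
  simp_rw [h]
  rw [← ofReal_integral_eq_lintegral_ofReal (integrable_max_mul_gpdf hv c)
    (Filter.Eventually.of_forall fun y => mul_nonneg (le_max_right _ _) (gpdf_nonneg hv y)),
    integral_max_mul_gpdf hv c]

lemma lint_psi_neg {v : ℝ} (hv : 0 < v) (c : ℝ) :
    ∫⁻ y, gk v y * ENNReal.ofReal (max (c - y) 0) = ENNReal.ofReal (gPsi v (-c)) := by
  have hint : Integrable (fun y => max (c - y) 0 * gpdf v y) := by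
    have := (integrable_max_mul_gpdf hv (-c)).comp_neg
    simpa [gpdf_neg, show ∀ y : ℝ, -y - -c = c - y by intro y; ring] using this
  have h : ∀ y, gk v y * ENNReal.ofReal (max (c - y) 0)
      = ENNReal.ofReal (max (c - y) 0 * gpdf v y) := by
    intro y
    rw [ENNReal.ofReal_mul (le_max_right _ _), mul_comm]
    rfl
  simp_rw [h]
  rw [← ofReal_integral_eq_lintegral_ofReal hint
    (Filter.Eventually.of_forall fun y => mul_nonneg (le_max_right _ _) (gpdf_nonneg hv y))]
  congr 1
  rw [← integral_max_mul_gpdf hv (-c), ← integral_neg_eq_self]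
  congr 1
  funext y
  rw [gpdf_neg]
  congr 2
  ring

lemma lint_gk_conv {u v : ℝ} (hu : 0 < u) (hv : 0 < v) (w : ℝ) :
    ∫⁻ y, gk u y * gk v (w + y) = gk (u + v) w := by
  have h : ∀ y, gk u y * gk v (w + y)
      = ENNReal.ofReal (gpdf (u + v) w)
        * ENNReal.ofReal (gpdf (u * v / (u + v)) (y + u * w / (u + v))) := by
    intro y
    rw [gk, gk, ← ENNReal.ofReal_mul (gpdf_nonneg hu y), gpdf_conv_pointwise hu hv,
      ENNReal.ofReal_mul (gpdf_nonneg (by positivity) w)]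
  simp_rw [h]
  rw [lintegral_const_mul _ (by
    exact ENNReal.measurable_ofReal.comp ((continuous_gpdf _).comp (by fun_prop)).measurable)]
  have htrans : ∫⁻ y, ENNReal.ofReal (gpdf (u * v / (u + v)) (y + u * w / (u + v))) = 1 := by
    rw [lintegral_add_right_eq_self (fun y => ENNReal.ofReal (gpdf (u * v / (u + v)) y))
      (u * w / (u + v))]
    exact lintegral_gpdf (by positivity)
  rw [htrans, mul_one]
  rfl

lemma indicator_one_ne_top {α : Type*} (s : Set α) (x : α) :
    s.indicator (1 : α → ℝ≥0∞) x ≠ ∞ := by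
  classical
  by_cases h : x ∈ s <;> simp [Set.indicator, h]

lemma double_repr {u v : ℝ} (hu : 0 < u) (hv : 0 < v) (T : Set ℝ)
    (P1 P2 : ℝ → ℝ) (hP1 : ∀ x, 0 ≤ P1 x)
    (E1 E2 : ℝ → Set ℝ)
    (hE1 : MeasurableSet {p : ℝ × ℝ | p.1 ∈ E1 p.2})
    (hE2 : MeasurableSet {p : ℝ × ℝ | p.1 ∈ E2 p.2})
    (h1 : ∀ x, ENNReal.ofReal (P1 x) = ∫⁻ y, (E1 y).indicator 1 x * gk u y)
    (h2 : ∀ x, ENNReal.ofReal (P2 x) = ∫⁻ z, (E2 z).indicator 1 x * gk v z) :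
    ∫⁻ x in T, ENNReal.ofReal (P1 x * P2 x)
      = ∫⁻ y, gk u y * ∫⁻ z, gk v z * volume ((E1 y ∩ E2 z) ∩ T) := by
  classical
  set S1 : Set (ℝ × ℝ) := {p : ℝ × ℝ | p.1 ∈ E1 p.2} with hS1def
  set S2 : Set (ℝ × ℝ) := {p : ℝ × ℝ | p.1 ∈ E2 p.2} with hS2def
  have ind1 : ∀ x y, (E1 y).indicator (1 : ℝ → ℝ≥0∞) x
      = S1.indicator (1 : ℝ × ℝ → ℝ≥0∞) (x, y) := by
    intro x y; by_cases h : x ∈ E1 y <;> simp [hS1def, Set.indicator, h]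
  have ind2 : ∀ x z, (E2 z).indicator (1 : ℝ → ℝ≥0∞) x
      = S2.indicator (1 : ℝ × ℝ → ℝ≥0∞) (x, z) := by
    intro x z; by_cases h : x ∈ E2 z <;> simp [hS2def, Set.indicator, h]
  have hm1 : Measurable (S1.indicator (1 : ℝ × ℝ → ℝ≥0∞)) := measurable_one.indicator hE1
  have hm2 : Measurable (S2.indicator (1 : ℝ × ℝ → ℝ≥0∞)) := measurable_one.indicator hE2
  have hsec1 : ∀ y : ℝ, MeasurableSet (E1 y) := by
    intro y
    have : Measurable fun x : ℝ => (x, y) := measurable_id.prodMk measurable_const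
    exact this hE1
  have hsec2 : ∀ z : ℝ, MeasurableSet (E2 z) := by
    intro z
    have : Measurable fun x : ℝ => (x, z) := measurable_id.prodMk measurable_const
    exact this hE2
  set C : ℝ → ℝ≥0∞ := fun x => ∫⁻ z, S2.indicator 1 (x, z) * gk v z with hCdef
  have hC : Measurable C := by
    apply Measurable.lintegral_prod_right (f := fun x z => S2.indicator 1 (x, z) * gk v z)
    exact hm2.mul ((measurable_gk v).comp measurable_snd)
  have hx1 : ∀ y : ℝ, Measurable fun x : ℝ => S1.indicator (1 : ℝ × ℝ → ℝ≥0∞) (x, y) := by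
    intro y; exact hm1.comp (measurable_id.prodMk measurable_const)
  have hy1 : ∀ x : ℝ, Measurable fun y : ℝ => S1.indicator (1 : ℝ × ℝ → ℝ≥0∞) (x, y) := by
    intro x; exact hm1.comp measurable_prodMk_left
  have hx2 : ∀ z : ℝ, Measurable fun x : ℝ => S2.indicator (1 : ℝ × ℝ → ℝ≥0∞) (x, z) := by
    intro z; exact hm2.comp (measurable_id.prodMk measurable_const)
  calc ∫⁻ x in T, ENNReal.ofReal (P1 x * P2 x)
      = ∫⁻ x in T, (∫⁻ y, S1.indicator 1 (x, y) * gk u y) * C x := by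
        refine lintegral_congr fun x => ?_
        rw [ENNReal.ofReal_mul (hP1 x), h1 x, h2 x]
        simp_rw [ind1, ind2]
        rfl
    _ = ∫⁻ x in T, ∫⁻ y, S1.indicator 1 (x, y) * gk u y * C x := by
        refine lintegral_congr fun x => ?_
        rw [lintegral_mul_const (f := fun y => S1.indicator 1 (x, y) * gk u y) _
          ((hy1 x).mul (measurable_gk u))]
    _ = ∫⁻ y, ∫⁻ x in T, S1.indicator 1 (x, y) * gk u y * C x := by
        refine lintegral_lintegral_swap ?_
        exact ((hm1.mul ((measurable_gk u).comp measurable_snd)).mul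
          (hC.comp measurable_fst)).aemeasurable
    _ = ∫⁻ y, gk u y * ∫⁻ x in T, S1.indicator 1 (x, y) * C x := by
        refine lintegral_congr fun y => ?_
        rw [← lintegral_const_mul (f := fun x => S1.indicator 1 (x, y) * C x) _
          ((hx1 y).mul hC)]
        refine lintegral_congr fun x => ?_
        ring
    _ = ∫⁻ y, gk u y * ∫⁻ x in T, ∫⁻ z, S1.indicator 1 (x, y) * (S2.indicator 1 (x, z) * gk v z) := by
        refine lintegral_congr fun y => ?_
        congr 1
        refine lintegral_congr fun x => ?_
        rw [hCdef]
        exact (lintegral_const_mul' _ _ (indicator_one_ne_top _ _)).symm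
    _ = ∫⁻ y, gk u y * ∫⁻ z, ∫⁻ x in T, S1.indicator 1 (x, y) * (S2.indicator 1 (x, z) * gk v z) := by
        refine lintegral_congr fun y => ?_
        congr 1
        refine lintegral_lintegral_swap ?_
        exact (((hm1.comp ((measurable_fst).prodMk measurable_const)).mul
          (hm2.mul ((measurable_gk v).comp measurable_snd)))).aemeasurable
    _ = ∫⁻ y, gk u y * ∫⁻ z, gk v z * ∫⁻ x in T, S1.indicator 1 (x, y) * S2.indicator 1 (x, z) := by
        refine lintegral_congr fun y => ?_
        congr 1
        refine lintegral_congr fun z => ?_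
        rw [← lintegral_const_mul
          (f := fun x => S1.indicator 1 (x, y) * S2.indicator 1 (x, z)) _
          ((hx1 y).mul (hx2 z))]
        refine lintegral_congr fun x => ?_
        ring
    _ = ∫⁻ y, gk u y * ∫⁻ z, gk v z * volume ((E1 y ∩ E2 z) ∩ T) := by
        refine lintegral_congr fun y => ?_
        congr 1
        refine lintegral_congr fun z => ?_
        congr 1
        have : ∀ x, S1.indicator 1 (x, y) * S2.indicator 1 (x, z)
            = (E1 y ∩ E2 z).indicator (1 : ℝ → ℝ≥0∞) x := by
          intro x
          rw [← ind1, ← ind2, Set.inter_indicator_one]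
          rfl
        simp_rw [this]
        rw [lintegral_indicator_one ((hsec1 y).inter (hsec2 z)),
          Measure.restrict_apply ((hsec1 y).inter (hsec2 z))]

lemma repr_compl {v : ℝ} (hv : 0 < v) (c : ℝ) (x : ℝ) :
    ENNReal.ofReal (1 - gcdf v (c - x))
      = ∫⁻ y, (Set.Ioi (c - y)).indicator 1 x * gk v y := by
  have h : ∀ y, (Set.Ioi (c - y)).indicator (1 : ℝ → ℝ≥0∞) x * gk v y
      = (Set.Ioi (c - x)).indicator (gk v) y := by
    intro y
    by_cases hxy : c - y < x
    · rw [Set.indicator_of_mem (Set.mem_Ioi.mpr hxy),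
        Set.indicator_of_mem (Set.mem_Ioi.mpr (by linarith)),
        Pi.one_apply, one_mul]
    · rw [Set.indicator_of_notMem (fun h => hxy (Set.mem_Ioi.mp h)),
        Set.indicator_of_notMem (by simp only [Set.mem_Ioi, not_lt] at hxy ⊢; linarith),
        zero_mul]
  simp_rw [h]
  rw [lintegral_indicator measurableSet_Ioi]
  simp only [gk]
  rw [← ofReal_integral_eq_lintegral_ofReal (integrable_gpdf hv).integrableOn
      (Filter.Eventually.of_forall (gpdf_nonneg hv)),
    integral_Ioi_gpdf hv]

lemma repr_cdf {v : ℝ} (hv : 0 < v) (c : ℝ) (x : ℝ) :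
    ENNReal.ofReal (gcdf v (c - x))
      = ∫⁻ y, (Set.Iic (c - y)).indicator 1 x * gk v y := by
  have h : ∀ y, (Set.Iic (c - y)).indicator (1 : ℝ → ℝ≥0∞) x * gk v y
      = (Set.Iic (c - x)).indicator (gk v) y := by
    intro y
    by_cases hxy : x ≤ c - y
    · rw [Set.indicator_of_mem (Set.mem_Iic.mpr hxy),
        Set.indicator_of_mem (Set.mem_Iic.mpr (by linarith)),
        Pi.one_apply, one_mul]
    · rw [Set.indicator_of_notMem (fun h => hxy (Set.mem_Iic.mp h)),
        Set.indicator_of_notMem (by simp only [Set.mem_Iic, not_le] at hxy ⊢; linarith),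
        zero_mul]
  simp_rw [h]
  rw [lintegral_indicator measurableSet_Iic]
  simp only [gk]
  rw [← ofReal_integral_eq_lintegral_ofReal (integrable_gpdf hv).integrableOn
      (Filter.Eventually.of_forall (gpdf_nonneg hv))]
  rfl

lemma LA_eval {u v : ℝ} (hu : 0 < u) (hv : 0 < v) (q r : ℝ) :
    ∫⁻ x in Set.Iio (0:ℝ), ENNReal.ofReal ((1 - gcdf u (q - x)) * (1 - gcdf v (r - x)))
      = ∫⁻ y, gk u y * ∫⁻ z, gk v z * ENNReal.ofReal (max (min (y - q) (z - r)) 0) := by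
  rw [double_repr hu hv (Set.Iio 0) _ _ (fun x => one_sub_gcdf_nonneg hu _)
    (fun y => Set.Ioi (q - y)) (fun z => Set.Ioi (r - z))
    (by exact measurableSet_lt (measurable_const.sub measurable_snd) measurable_fst)
    (by exact measurableSet_lt (measurable_const.sub measurable_snd) measurable_fst)
    (fun x => repr_compl hu q x) (fun x => repr_compl hv r x)]
  refine lintegral_congr fun y => ?_
  congr 1
  refine lintegral_congr fun z => ?_
  congr 1
  rw [Set.Ioi_inter_Ioi, Set.Ioi_inter_Iio, Real.volume_Ioo, ofReal_max_zero]
  congr 1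
  rcases le_total (q - y) (r - z) with h | h
  · rw [max_eq_right h, min_eq_right (by linarith)]; ring
  · rw [max_eq_left h, min_eq_left (by linarith)]; ring

lemma LB_eval {u v : ℝ} (hu : 0 < u) (hv : 0 < v) (q r : ℝ) :
    ∫⁻ x in Set.Ioi (0:ℝ), ENNReal.ofReal (gcdf u (q - x) * gcdf v (r - x))
      = ∫⁻ y, gk u y * ∫⁻ z, gk v z * ENNReal.ofReal (max (min (q - y) (r - z)) 0) := by
  rw [double_repr hu hv (Set.Ioi 0) _ _ (fun x => gcdf_nonneg hu _)
    (fun y => Set.Iic (q - y)) (fun z => Set.Iic (r - z))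
    (by exact measurableSet_le measurable_fst (measurable_const.sub measurable_snd))
    (by exact measurableSet_le measurable_fst (measurable_const.sub measurable_snd))
    (fun x => repr_cdf hu q x) (fun x => repr_cdf hv r x)]
  refine lintegral_congr fun y => ?_
  congr 1
  refine lintegral_congr fun z => ?_
  congr 1
  rw [Set.Iic_inter_Iic, Set.inter_comm, Set.Ioi_inter_Iic, Real.volume_Ioc, ofReal_max_zero,
    sub_zero]

lemma combine {u v : ℝ} (hu : 0 < u) (hv : 0 < v) (q r : ℝ) :
    (∫⁻ y, gk u y * ∫⁻ z, gk v z * ENNReal.ofReal (max (min (y - q) (z - r)) 0))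
      + (∫⁻ y, gk u y * ∫⁻ z, gk v z * ENNReal.ofReal (max (min (q - y) (r - z)) 0))
      + (∫⁻ y, gk u y * ∫⁻ z, gk v z * ENNReal.ofReal (max ((z - r) - (y - q)) 0))
      = (∫⁻ y, gk u y * ∫⁻ z, gk v z * ENNReal.ofReal (max (q - y) 0))
        + (∫⁻ y, gk u y * ∫⁻ z, gk v z * ENNReal.ofReal (max (z - r) 0)) := by
  have hin : ∀ g : ℝ → ℝ → ℝ, Continuous (fun p : ℝ × ℝ => g p.1 p.2) →
      ∀ y : ℝ, Measurable fun z => gk v z * ENNReal.ofReal (g y z) := by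
    intro g hg y
    exact (measurable_gk v).mul (ENNReal.measurable_ofReal.comp
      ((hg.comp (Continuous.prodMk_right y)).measurable))
  have hJ : ∀ g : ℝ → ℝ → ℝ, Continuous (fun p : ℝ × ℝ => g p.1 p.2) →
      Measurable fun y => ∫⁻ z, gk v z * ENNReal.ofReal (g y z) := by
    intro g hg
    apply Measurable.lintegral_prod_right (f := fun y z => gk v z * ENNReal.ofReal (g y z))
    exact ((measurable_gk v).comp measurable_snd).mul (ENNReal.measurable_ofReal.comp hg.measurable)
  set g1 : ℝ → ℝ → ℝ := fun y z => max (min (y - q) (z - r)) 0 with hg1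
  set g2 : ℝ → ℝ → ℝ := fun y z => max (min (q - y) (r - z)) 0 with hg2
  set g3 : ℝ → ℝ → ℝ := fun y z => max ((z - r) - (y - q)) 0 with hg3
  set g4 : ℝ → ℝ → ℝ := fun y z => max (q - y) 0 with hg4
  set g5 : ℝ → ℝ → ℝ := fun y z => max (z - r) 0 with hg5
  have c1 : Continuous fun p : ℝ × ℝ => max (min (p.1 - q) (p.2 - r)) 0 := by fun_prop
  have c2 : Continuous fun p : ℝ × ℝ => max (min (q - p.1) (r - p.2)) 0 := by fun_prop
  have c3 : Continuous fun p : ℝ × ℝ => max ((p.2 - r) - (p.1 - q)) 0 := by fun_prop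
  have c4 : Continuous fun p : ℝ × ℝ => max (q - p.1) 0 := by fun_prop
  have c5 : Continuous fun p : ℝ × ℝ => max (p.2 - r) 0 := by fun_prop
  have hJeq : ∀ y : ℝ,
      (∫⁻ z, gk v z * ENNReal.ofReal (max (min (y - q) (z - r)) 0))
        + (∫⁻ z, gk v z * ENNReal.ofReal (max (min (q - y) (r - z)) 0))
        + (∫⁻ z, gk v z * ENNReal.ofReal (max ((z - r) - (y - q)) 0))
      = (∫⁻ z, gk v z * ENNReal.ofReal (max (q - y) 0))
        + (∫⁻ z, gk v z * ENNReal.ofReal (max (z - r) 0)) := by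
    intro y
    rw [← lintegral_add_left (hin g1 c1 y), ← lintegral_add_left (f := fun z => gk v z * ENNReal.ofReal (g1 y z) + gk v z * ENNReal.ofReal (g2 y z)) ((hin g1 c1 y).add (hin g2 c2 y)),
      ← lintegral_add_left (hin g4 c4 y)]
    refine lintegral_congr fun z => ?_
    have hk := key_identity (y - q) (z - r)
    simp only [neg_sub] at hk
    rw [← mul_add, ← mul_add, ← mul_add,
      ← ENNReal.ofReal_add (le_max_right _ _) (le_max_right _ _),
      ← ENNReal.ofReal_add (by positivity) (le_max_right _ _),
      ← ENNReal.ofReal_add (le_max_right _ _) (le_max_right _ _), hk]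
  rw [← lintegral_add_left (f := fun y => gk u y * ∫⁻ z, gk v z * ENNReal.ofReal (g1 y z)) ((measurable_gk u).mul (hJ g1 c1)),
    ← lintegral_add_left (f := fun y => gk u y * (∫⁻ z, gk v z * ENNReal.ofReal (g1 y z)) + gk u y * ∫⁻ z, gk v z * ENNReal.ofReal (g2 y z)) (((measurable_gk u).mul (hJ g1 c1)).add
      ((measurable_gk u).mul (hJ g2 c2))),
    ← lintegral_add_left (f := fun y => gk u y * ∫⁻ z, gk v z * ENNReal.ofReal (g4 y z)) ((measurable_gk u).mul (hJ g4 c4))]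
  refine lintegral_congr fun y => ?_
  rw [← mul_add, ← mul_add, ← mul_add, hJeq y]

lemma L4_eval {u v : ℝ} (hu : 0 < u) (hv : 0 < v) (q : ℝ) :
    ∫⁻ y, gk u y * ∫⁻ z, gk v z * ENNReal.ofReal (max (q - y) 0)
      = ENNReal.ofReal (gPsi u (-q)) := by
  have h : ∀ y : ℝ, (∫⁻ z, gk v z * ENNReal.ofReal (max (q - y) 0))
      = ENNReal.ofReal (max (q - y) 0) := by
    intro y
    rw [lintegral_mul_const _ (measurable_gk v), lintegral_gk hv, one_mul]
  simp_rw [h]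
  exact lint_psi_neg hu q

lemma L5_eval {u v : ℝ} (hu : 0 < u) (hv : 0 < v) (r : ℝ) :
    ∫⁻ y, gk u y * ∫⁻ z, gk v z * ENNReal.ofReal (max (z - r) 0)
      = ENNReal.ofReal (gPsi v r) := by
  rw [lintegral_mul_const _ (measurable_gk u), lintegral_gk hu, one_mul]
  exact lint_psi hv r

lemma L3_eval {u v : ℝ} (hu : 0 < u) (hv : 0 < v) (q r : ℝ) :
    ∫⁻ y, gk u y * ∫⁻ z, gk v z * ENNReal.ofReal (max ((z - r) - (y - q)) 0)
      = ENNReal.ofReal (gPsi (u + v) (r - q)) := by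
  have h1 : ∀ y : ℝ, (∫⁻ z, gk v z * ENNReal.ofReal (max ((z - r) - (y - q)) 0))
      = ∫⁻ z, gk v (z + y) * ENNReal.ofReal (max (z - (r - q)) 0) := by
    intro y
    rw [← lintegral_add_right_eq_self
      (fun z => gk v z * ENNReal.ofReal (max ((z - r) - (y - q)) 0)) y]
    refine lintegral_congr fun z => ?_
    have : z + y - r - (y - q) = z - (r - q) := by ring
    simp only [this]
  simp_rw [h1]
  have hmz : ∀ y : ℝ, Measurable fun z : ℝ =>
      gk v (z + y) * ENNReal.ofReal (max (z - (r - q)) 0) := by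
    intro y
    exact ((measurable_gk v).comp (measurable_id.add_const y)).mul
      (ENNReal.measurable_ofReal.comp (by fun_prop))
  have h2 : ∀ y : ℝ, gk u y * ∫⁻ z, gk v (z + y) * ENNReal.ofReal (max (z - (r - q)) 0)
      = ∫⁻ z, gk u y * (gk v (z + y) * ENNReal.ofReal (max (z - (r - q)) 0)) := by
    intro y
    exact (lintegral_const_mul _ (hmz y)).symm
  simp_rw [h2]
  rw [lintegral_lintegral_swap]
  · have h3 : ∀ z : ℝ, (∫⁻ y, gk u y * (gk v (z + y) * ENNReal.ofReal (max (z - (r - q)) 0)))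
        = gk (u + v) z * ENNReal.ofReal (max (z - (r - q)) 0) := by
      intro z
      have : ∀ y : ℝ, gk u y * (gk v (z + y) * ENNReal.ofReal (max (z - (r - q)) 0))
          = gk u y * gk v (z + y) * ENNReal.ofReal (max (z - (r - q)) 0) := fun y => by ring
      simp_rw [this]
      have hconv : Measurable fun y : ℝ => gk u y * gk v (z + y) := by
        exact (measurable_gk u).mul ((measurable_gk v).comp (measurable_const.add measurable_id))
      rw [lintegral_mul_const (f := fun y => gk u y * gk v (z + y)) _ hconv,
        lint_gk_conv hu hv z]
    simp_rw [h3]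
    exact lint_psi (by positivity) (r - q)
  · apply Measurable.aemeasurable
    rw [Function.uncurry_def]
    apply Measurable.mul (f := fun p : ℝ × ℝ => gk u p.1)
    · exact (measurable_gk u).comp measurable_fst
    apply Measurable.mul (f := fun p : ℝ × ℝ => gk v (p.2 + p.1))
    · exact (measurable_gk v).comp (measurable_snd.add measurable_fst)
    · exact ENNReal.measurable_ofReal.comp (by fun_prop)

/-- The covariance kernel `Γ₂` identity: for Brownian motion `B` (`P(B_v ≤ a)` is
the Gaussian cdf `Φ_v(a)`),
`∫_{−∞}^0 P(B_{σ²s} > q−x)P(B_{σ²t} > r−x) dx + ∫_0^∞ P(B_{σ²s} ≤ q−x)P(B_{σ²t} ≤ r−x) dx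
  = Ψ_{σ²s}(−q) + Ψ_{σ²t}(r) − Ψ_{σ²(t+s)}(r−q)`. -/
theorem gamma2_identity (σ2 s t q r : ℝ) (hσ : 0 < σ2) (hs : 0 < s) (ht : 0 < t) :
    (∫ x in Set.Iio (0:ℝ),
        (1 - gcdf (σ2 * s) (q - x)) * (1 - gcdf (σ2 * t) (r - x)))
      + (∫ x in Set.Ioi (0:ℝ), gcdf (σ2 * s) (q - x) * gcdf (σ2 * t) (r - x))
      = gPsi (σ2 * s) (-q) + gPsi (σ2 * t) r - gPsi (σ2 * (t + s)) (r - q) := by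
  have hu : 0 < σ2 * s := by positivity
  have hv : 0 < σ2 * t := by positivity
  set u := σ2 * s with hudef
  set v := σ2 * t with hvdef
  have hts : σ2 * (t + s) = u + v := by rw [hudef, hvdef]; ring
  rw [hts]
  -- convert Bochner integrals to lintegrals
  have hmA : AEStronglyMeasurable
      (fun x => (1 - gcdf u (q - x)) * (1 - gcdf v (r - x)))
      (volume.restrict (Set.Iio (0:ℝ))) := by
    refine Measurable.aestronglyMeasurable ?_
    exact (measurable_const.sub ((measurable_gcdf hu).comp
        (measurable_const.sub measurable_id))).mul
      (measurable_const.sub ((measurable_gcdf hv).comp (measurable_const.sub measurable_id)))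
  have hmB : AEStronglyMeasurable
      (fun x => gcdf u (q - x) * gcdf v (r - x))
      (volume.restrict (Set.Ioi (0:ℝ))) := by
    refine Measurable.aestronglyMeasurable ?_
    exact ((measurable_gcdf hu).comp (measurable_const.sub measurable_id)).mul
      ((measurable_gcdf hv).comp (measurable_const.sub measurable_id))
  have hA : (∫ x in Set.Iio (0:ℝ), (1 - gcdf u (q - x)) * (1 - gcdf v (r - x)))
      = (∫⁻ x in Set.Iio (0:ℝ),
          ENNReal.ofReal ((1 - gcdf u (q - x)) * (1 - gcdf v (r - x)))).toReal := by
    rw [integral_eq_lintegral_of_nonneg_ae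
      (Filter.Eventually.of_forall fun x =>
        mul_nonneg (one_sub_gcdf_nonneg hu _) (one_sub_gcdf_nonneg hv _)) hmA]
  have hB : (∫ x in Set.Ioi (0:ℝ), gcdf u (q - x) * gcdf v (r - x))
      = (∫⁻ x in Set.Ioi (0:ℝ),
          ENNReal.ofReal (gcdf u (q - x) * gcdf v (r - x))).toReal := by
    rw [integral_eq_lintegral_of_nonneg_ae
      (Filter.Eventually.of_forall fun x =>
        mul_nonneg (gcdf_nonneg hu _) (gcdf_nonneg hv _)) hmB]
  rw [hA, hB]
  set LA := ∫⁻ x in Set.Iio (0:ℝ),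
      ENNReal.ofReal ((1 - gcdf u (q - x)) * (1 - gcdf v (r - x))) with hLA
  set LB := ∫⁻ x in Set.Ioi (0:ℝ),
      ENNReal.ofReal (gcdf u (q - x) * gcdf v (r - x)) with hLB
  have hkey : LA + LB + ENNReal.ofReal (gPsi (u + v) (r - q))
      = ENNReal.ofReal (gPsi u (-q)) + ENNReal.ofReal (gPsi v r) := by
    rw [hLA, hLB, LA_eval hu hv q r, LB_eval hu hv q r, ← L3_eval hu hv q r,
      ← L4_eval hu hv q, ← L5_eval hu hv r]
    exact combine hu hv q r
  have hsum : LA + LB + ENNReal.ofReal (gPsi (u + v) (r - q)) ≠ ⊤ := by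
    rw [hkey]
    exact ENNReal.add_ne_top.mpr ⟨ENNReal.ofReal_ne_top, ENNReal.ofReal_ne_top⟩
  have hfin1 : LA ≠ ⊤ := ne_top_of_le_ne_top hsum (le_self_add.trans le_self_add)
  have hfin2 : LB ≠ ⊤ := ne_top_of_le_ne_top hsum (le_add_self.trans le_self_add)
  have htr := congrArg ENNReal.toReal hkey
  rw [ENNReal.toReal_add (ENNReal.add_ne_top.mpr ⟨hfin1, hfin2⟩) ENNReal.ofReal_ne_top,
    ENNReal.toReal_add hfin1 hfin2,
    ENNReal.toReal_add ENNReal.ofReal_ne_top ENNReal.ofReal_ne_top,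
    ENNReal.toReal_ofReal (gPsi_nonneg (by positivity) _),
    ENNReal.toReal_ofReal (gPsi_nonneg hu _),
    ENNReal.toReal_ofReal (gPsi_nonneg hv _)] at htr
  linarith
end

section
/- Let Z(t,r) be the mean-zero Gaussian process on ℝ_+ × ℝ with covariance E[Z(s,q)Z(t,r)] = (σ_ξ²/σ₁²)Γ₁((s,q),(t,r)) + ϱ₀Γ₂((s,q),(t,r)) where Γ₁, Γ₂ are as defined via Ψ. If ϱ₀ = σ_ξ²/σ₁², then the restriction t ↦ Z(t,0) has covariance E[Z(s,0)Z(t,0)] = (σ_ξ²/√(2πσ₁²)) (√s + √t − √|t−s|); i.e., Z(·,0) is a constant multiple of fractional Brownian motion with Hurst parameter 1/4. -/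
open MeasureTheory ProbabilityTheory Real

/-- `Γ₁((s,q),(t,r)) = Ψ_{σ₁²(t+s)}(r−q) − Ψ_{σ₁²|t−s|}(r−q)`. -/
noncomputable def Gamma1 (σ1sq s q t r : ℝ) : ℝ :=
  gPsi (σ1sq * (t + s)) (r - q) - gPsi (σ1sq * |t - s|) (r - q)

/-- `Γ₂((s,q),(t,r)) = Ψ_{σ₁²s}(−q) + Ψ_{σ₁²t}(r) − Ψ_{σ₁²(t+s)}(r−q)`. -/
noncomputable def Gamma2 (σ1sq s q t r : ℝ) : ℝ :=
  gPsi (σ1sq * s) (-q) + gPsi (σ1sq * t) r - gPsi (σ1sq * (t + s)) (r - q)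

lemma psi0 (v : ℝ) (hv : 0 ≤ v) : gPsi v 0 = Real.sqrt v / Real.sqrt (2 * π) := by
  unfold gPsi gpdf
  rcases eq_or_lt_of_le hv with h | h
  · simp [← h, Real.zero_rpow]
  · have h2 : (0:ℝ) < 2 * π * v := by positivity
    rw [Real.rpow_neg h2.le, ← Real.sqrt_eq_rpow]
    have : Real.sqrt (2 * π * v) = Real.sqrt (2*π) * Real.sqrt v := Real.sqrt_mul (by positivity) v
    rw [this]
    field_simp
    simp [Real.sq_sqrt h.le]

/-- If a mean-zero process `Z` has covariance
`E[Z(s,q)Z(t,r)] = (σ_ξ²/σ₁²)Γ₁ + ϱ₀Γ₂` and `ϱ₀ = σ_ξ²/σ₁²`, then on the line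
`r = 0` its covariance is that of fractional Brownian motion with Hurst 1/4:
`E[Z(s,0)Z(t,0)] = (σ_ξ²/√(2πσ₁²))(√s + √t − √|t−s|)`. -/
theorem fbm_quarter_covariance
    {Ω : Type*} [MeasureSpace Ω] [IsProbabilityMeasure (ℙ : Measure Ω)]
    (σξ σ1 ϱ0 : ℝ) (hσξ : 0 < σξ) (hσ1 : 0 < σ1)
    (Z : ℝ × ℝ → Ω → ℝ)
    (hmean : ∀ s q, ∫ ω, Z (s, q) ω = 0)
    (hcov : ∀ s q t r : ℝ, 0 ≤ s → 0 ≤ t →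
      ∫ ω, Z (s, q) ω * Z (t, r) ω
        = (σξ^2 / σ1^2) * Gamma1 (σ1^2) s q t r + ϱ0 * Gamma2 (σ1^2) s q t r)
    (hϱ : ϱ0 = σξ^2 / σ1^2)
    (s t : ℝ) (hs : 0 < s) (ht : 0 < t) :
    ∫ ω, Z (s, 0) ω * Z (t, 0) ω
      = (σξ^2 / Real.sqrt (2 * π * σ1^2)) *
          (Real.sqrt s + Real.sqrt t - Real.sqrt |t - s|) := by
  rw [hcov s 0 t 0 hs.le ht.le, hϱ]
  unfold Gamma1 Gamma2
  simp only [sub_zero, neg_zero]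
  rw [psi0 _ (by positivity), psi0 _ (by positivity), psi0 _ (by positivity),
    psi0 _ (by positivity)]
  have hsq : ∀ x : ℝ, Real.sqrt (σ1^2 * x) = σ1 * Real.sqrt x := fun x => by
    rw [Real.sqrt_mul (sq_nonneg σ1), Real.sqrt_sq hσ1.le]
  rw [hsq, hsq, hsq, hsq, show (2*π*σ1^2 : ℝ) = σ1^2 * (2*π) by ring, hsq]
  have h2π : (0:ℝ) < Real.sqrt (2*π) := Real.sqrt_pos.2 (by positivity)
  field_simp
  ring
end
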